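/- Threshold structure of the optimal policy (Theorem 1). Let V : X → ℝ be monotone with respect to ⪯ (as holds for the value function of the average-AoI MDP by Lemma 2). Fix a device k, a feasible action w* ∈ W with w*_k = (1,2), and values of all state components other than A_{d,k}; for a ∈ {0,…,Âd_k} let X(a) denote the state with A_{d,k} = a and the other components as fixed. Then the set Φ = {a ∈ {0,…,Âd_k} : J_V(X(a), w*) ≤ J_V(X(a), w') for all w' ∈ W} is upward closed: if a ∈ Φ and a ≤ a' ≤ Âd_k then a' ∈ Φ. Equivalently, setting φ = min Φ when Φ ≠ ∅, the action w* minimizes J_V(X(a'), ·) over W for every a' with φ ≤ a' ≤ Âd_k; i.e., the optimal scheduling-and-sampling decision w* with w*_k = (1,2) is threshold-based in the AoI A_{d,k} at device k. -/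

import Mathlib

namespace AoI

/-- Per-device control action: idle `(0,0)`, continue the current in-transmission
update `(1,1)`, or sample and transmit a new update `(1,2)`. -/
inductive Act : Type
  | idle : Act
  | cont : Act
  | new  : Act
  deriving DecidableEq

instance : Fintype Act :=
  ⟨{Act.idle, Act.cont, Act.new}, by intro a; cases a <;> simp⟩

/-- Per-device state `(A_d, A_r, D)`. -/
abbrev S : Type := ℕ × ℕ × ℕ

/-- Success successor under action `(1,1)`. -/
def sCont (L Ahd Ahr : ℕ) (x : S) : S :=
  if x.2.2 = 1 then (0, min (x.1 + 1) Ahr, L)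
  else (min (x.1 + 1) Ahd, min (x.2.1 + 1) Ahr, x.2.2 - 1)

/-- Failure successor under `(1,1)`; this is also the unscheduled successor
`X_{k,un}` under action `(0,0)`. -/
def fCont (Ahd Ahr : ℕ) (x : S) : S :=
  (min (x.1 + 1) Ahd, min (x.2.1 + 1) Ahr, x.2.2)

/-- Success successor under action `(1,2)`. -/
def sNew (L Ahr : ℕ) (x : S) : S := (1, min (x.2.1 + 1) Ahr, L - 1)

/-- Failure successor under action `(1,2)`. -/
def fNew (L Ahr : ℕ) (x : S) : S := (0, min (x.2.1 + 1) Ahr, L)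

/-- Per-device transition kernel `P_k(x' | x, a)`. -/
def Pk (lam : ℝ) (L Ahd Ahr : ℕ) (x x' : S) : Act → ℝ
  | Act.idle => if x' = fCont Ahd Ahr x then 1 else 0
  | Act.cont =>
      (if x' = sCont L Ahd Ahr x then lam else 0) +
        (if x' = fCont Ahd Ahr x then 1 - lam else 0)
  | Act.new =>
      (if x' = sNew L Ahr x then lam else 0) +
        (if x' = fNew L Ahr x then 1 - lam else 0)

/-- Per-device state space `{0,…,Âd} × {0,…,Âr} × {1,…,L}`. -/
def spaceS (L Ahd Ahr : ℕ) : Finset S :=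
  Finset.range (Ahd + 1) ×ˢ (Finset.range (Ahr + 1) ×ˢ Finset.Icc 1 L)

/-- Joint state space `X = X_1 × ⋯ × X_K`. -/
def jointSpace {K : ℕ} (L Ahd Ahr : Fin K → ℕ) : Finset (Fin K → S) :=
  Fintype.piFinset fun k => spaceS (L k) (Ahd k) (Ahr k)

/-- Joint transition kernel `P(X' | X, w) = ∏ₖ P_k(X'_k | X_k, w_k)`. -/
def Pjoint {K : ℕ} (lam : Fin K → ℝ) (L Ahd Ahr : Fin K → ℕ)
    (x x' : Fin K → S) (w : Fin K → Act) : ℝ :=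
  ∏ k, Pk (lam k) (L k) (Ahd k) (Ahr k) (x k) (x' k) (w k)

/-- Feasible joint actions: at most `M` devices are scheduled. -/
def feasible (K M : ℕ) : Finset (Fin K → Act) :=
  Finset.univ.filter fun w => (Finset.univ.filter fun k => w k ≠ Act.idle).card ≤ M

lemma feasible_nonempty (K M : ℕ) : (feasible K M).Nonempty := by
  refine ⟨fun _ => Act.idle, Finset.mem_filter.mpr ⟨Finset.mem_univ _, ?_⟩⟩
  simp

/-- The state–action cost `J_V(X, w) = Σₖ A_{r,k} + Σ_{X'∈X} P(X'|X,w) V(X')`. -/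
def J {K : ℕ} (lam : Fin K → ℝ) (L Ahd Ahr : Fin K → ℕ)
    (V : (Fin K → S) → ℝ) (x : Fin K → S) (w : Fin K → Act) : ℝ :=
  (∑ k, ((x k).2.1 : ℝ)) +
    ∑ x' ∈ jointSpace L Ahd Ahr, Pjoint lam L Ahd Ahr x x' w * V x'

/-- Componentwise order on per-device states:
`(A¹_d, A¹_r, D¹) ⪯ (A²_d, A²_r, D²)` iff `A¹_d ≤ A²_d`, `A¹_r ≤ A²_r`, `D¹ = D²`. -/
def xleS (x y : S) : Prop := x.1 ≤ y.1 ∧ x.2.1 ≤ y.2.1 ∧ x.2.2 = y.2.2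



/-- Success/failure weight of an outcome bit. -/
def wt (lam : ℝ) : Act → Bool → ℝ
  | Act.idle, true => 1
  | Act.idle, false => 0
  | Act.cont, true => lam
  | Act.cont, false => 1 - lam
  | Act.new, true => lam
  | Act.new, false => 1 - lam

/-- Successor state for an outcome bit. -/
def pt (L Ahd Ahr : ℕ) : Act → Bool → S → S
  | Act.idle, _, x => fCont Ahd Ahr x
  | Act.cont, true, x => sCont L Ahd Ahr x
  | Act.cont, false, x => fCont Ahd Ahr x
  | Act.new, true, x => sNew L Ahr x
  | Act.new, false, x => fNew L Ahr x

lemma wt_nonneg (lam : ℝ) (h0 : 0 < lam) (h1 : lam ≤ 1) (a : Act) (b : Bool) :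
    0 ≤ wt lam a b := by
  cases a <;> cases b <;> simp [wt] <;> linarith

lemma Pk_eq (lam : ℝ) (L Ahd Ahr : ℕ) (x x' : S) (a : Act) :
    Pk lam L Ahd Ahr x x' a =
      ∑ b : Bool, wt lam a b * (if x' = pt L Ahd Ahr a b x then 1 else 0) := by
  cases a <;> simp only [Pk, wt, pt, Fintype.sum_bool] <;> split_ifs <;> simp_all

lemma pt_mem (L Ahd Ahr : ℕ) (hL : 2 ≤ L) (hAd : 1 ≤ Ahd) (a : Act) (b : Bool)
    (x : S) (hx : x ∈ spaceS L Ahd Ahr) : pt L Ahd Ahr a b x ∈ spaceS L Ahd Ahr := by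
  simp only [spaceS, Finset.mem_product, Finset.mem_range, Finset.mem_Icc] at hx ⊢
  obtain ⟨h1, h2, h3, h4⟩ := hx
  cases a <;> cases b <;>
    simp only [pt, fCont, sCont, sNew, fNew] <;>
    first
      | (split_ifs <;> simp <;> omega)
      | (simp <;> omega)

lemma pt_mono (L Ahd Ahr : ℕ) (a : Act) (b : Bool) (x y : S) (h : xleS x y) :
    xleS (pt L Ahd Ahr a b x) (pt L Ahd Ahr a b y) := by
  obtain ⟨h1, h2, h3⟩ := h
  cases a <;> cases b <;>
    simp only [pt, fCont, sCont, sNew, fNew, xleS, h3] <;>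
    first
      | (split_ifs <;> simp <;> omega)
      | (simp <;> omega)

lemma prod_ite_eq_ite {K : ℕ} (x' p : Fin K → S) :
    (∏ k, (if x' k = p k then (1 : ℝ) else 0)) = if x' = p then 1 else 0 := by
  split_ifs with h
  · simp [funext_iff.mp h]
  · obtain ⟨k, hk⟩ := Function.ne_iff.mp h
    exact Finset.prod_eq_zero (Finset.mem_univ k) (by simp [hk])

lemma sum_expand {K : ℕ} (lam : Fin K → ℝ) (L Ahd Ahr : Fin K → ℕ)
    (hL : ∀ k, 2 ≤ L k) (hAd : ∀ k, 1 ≤ Ahd k)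
    (V : (Fin K → S) → ℝ) (x : Fin K → S) (hx : x ∈ jointSpace L Ahd Ahr)
    (w : Fin K → Act) :
    ∑ x' ∈ jointSpace L Ahd Ahr, Pjoint lam L Ahd Ahr x x' w * V x' =
      ∑ b : Fin K → Bool, (∏ k, wt (lam k) (w k) (b k)) *
        V (fun k => pt (L k) (Ahd k) (Ahr k) (w k) (b k) (x k)) := by
  have hmem : ∀ b : Fin K → Bool,
      (fun k => pt (L k) (Ahd k) (Ahr k) (w k) (b k) (x k)) ∈ jointSpace L Ahd Ahr := by
    intro b
    rw [jointSpace, Fintype.mem_piFinset]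
    intro j
    exact pt_mem _ _ _ (hL j) (hAd j) _ _ _ ((Fintype.mem_piFinset).mp hx j)
  have step1 : ∀ x', Pjoint lam L Ahd Ahr x x' w =
      ∑ b : Fin K → Bool, (∏ k, wt (lam k) (w k) (b k)) *
        (if x' = (fun k => pt (L k) (Ahd k) (Ahr k) (w k) (b k) (x k)) then (1 : ℝ) else 0) := by
    intro x'
    rw [Pjoint]
    simp_rw [Pk_eq]
    rw [Finset.prod_univ_sum]
    rw [Fintype.piFinset_univ]
    refine Finset.sum_congr rfl fun b _ => ?_
    rw [Finset.prod_mul_distrib, prod_ite_eq_ite]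
  calc ∑ x' ∈ jointSpace L Ahd Ahr, Pjoint lam L Ahd Ahr x x' w * V x'
      = ∑ x' ∈ jointSpace L Ahd Ahr, ∑ b : Fin K → Bool,
          (∏ k, wt (lam k) (w k) (b k)) *
          ((if x' = (fun k => pt (L k) (Ahd k) (Ahr k) (w k) (b k) (x k)) then (1:ℝ) else 0)
            * V x') := by
        refine Finset.sum_congr rfl fun x' _ => ?_
        rw [step1, Finset.sum_mul]
        exact Finset.sum_congr rfl fun b _ => by ring
    _ = ∑ b : Fin K → Bool, ∑ x' ∈ jointSpace L Ahd Ahr,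
          (∏ k, wt (lam k) (w k) (b k)) *
          ((if x' = (fun k => pt (L k) (Ahd k) (Ahr k) (w k) (b k) (x k)) then (1:ℝ) else 0)
            * V x') := Finset.sum_comm
    _ = _ := by
        refine Finset.sum_congr rfl fun b _ => ?_
        rw [← Finset.mul_sum]
        congr 1
        simp_rw [ite_mul, one_mul, zero_mul]
        rw [Finset.sum_ite_eq' (jointSpace L Ahd Ahr)]
        simp [hmem b]

/-- Theorem 1: threshold structure of the optimal policy. With
all state components other than `A_{d,k}` fixed (encoded by `x0`), the set of
values `a` of `A_{d,k}` at which the action `w*` (with `w*_k = (1,2)`) minimizes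
`J_V(X(a), ·)` over `W` is upward closed in `{0,…,Âd_k}`. -/
theorem threshold_structure_optimal_policy
    (K M : ℕ) (hK : 1 ≤ K) (hM1 : 1 ≤ M) (hM2 : M ≤ K)
    (lam : Fin K → ℝ) (L Ahd Ahr : Fin K → ℕ)
    (hlam : ∀ k, 0 < lam k ∧ lam k ≤ 1)
    (hL : ∀ k, 2 ≤ L k) (hAd : ∀ k, 1 ≤ Ahd k) (hAr : ∀ k, 1 ≤ Ahr k)
    (V : (Fin K → S) → ℝ)
    (hV : ∀ x1 ∈ jointSpace L Ahd Ahr, ∀ x2 ∈ jointSpace L Ahd Ahr,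
      (∀ k, xleS (x1 k) (x2 k)) → V x1 ≤ V x2)
    (k : Fin K)
    (wstar : Fin K → Act) (hwfeas : wstar ∈ feasible K M) (hwk : wstar k = Act.new)
    (x0 : Fin K → S) (hx0 : x0 ∈ jointSpace L Ahd Ahr) :
    ∀ a a' : ℕ, a ≤ a' → a' ≤ Ahd k →
      (∀ w' ∈ feasible K M,
        J lam L Ahd Ahr V (Function.update x0 k (a, (x0 k).2)) wstar ≤
          J lam L Ahd Ahr V (Function.update x0 k (a, (x0 k).2)) w') →
      (∀ w' ∈ feasible K M,
        J lam L Ahd Ahr V (Function.update x0 k (a', (x0 k).2)) wstar ≤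
          J lam L Ahd Ahr V (Function.update x0 k (a', (x0 k).2)) w') := by
  intro a a' haa ha' hopt w' hw'
  set xa := Function.update x0 k (a, (x0 k).2) with hxa
  set xa' := Function.update x0 k (a', (x0 k).2) with hxa'
  -- memberships
  have hx0k := (Fintype.mem_piFinset).mp hx0
  have hmemS : ∀ c : ℕ, c ≤ Ahd k →
      Function.update x0 k (c, (x0 k).2) ∈ jointSpace L Ahd Ahr := by
    intro c hc
    rw [jointSpace, Fintype.mem_piFinset]
    intro j
    by_cases hj : j = k
    · subst hj
      have := hx0k j
      simp only [spaceS, Finset.mem_product, Finset.mem_range, Finset.mem_Icc,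
        Function.update_self] at this ⊢
      exact ⟨by omega, this.2⟩
    · rw [Function.update_of_ne hj]; exact hx0k j
  have hxamem : xa ∈ jointSpace L Ahd Ahr := hmemS a (le_trans haa ha')
  have hxa'mem : xa' ∈ jointSpace L Ahd Ahr := hmemS a' ha'
  -- A_r components agree
  have hsnd : ∀ j, (xa j).2 = (xa' j).2 := by
    intro j
    by_cases hj : j = k
    · subst hj; simp [hxa, hxa']
    · simp [hxa, hxa', Function.update_of_ne hj]
  have hArsum : (∑ j, ((xa j).2.1 : ℝ)) = ∑ j, ((xa' j).2.1 : ℝ) := by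
    refine Finset.sum_congr rfl fun j _ => ?_
    rw [hsnd j]
  -- componentwise order
  have hord : ∀ j, xleS (xa j) (xa' j) := by
    intro j
    by_cases hj : j = k
    · subst hj
      simp only [hxa, hxa', Function.update_self]
      exact ⟨haa, le_refl _, rfl⟩
    · simp only [hxa, hxa', Function.update_of_ne hj]
      exact ⟨le_refl _, le_refl _, rfl⟩
  -- J at wstar does not depend on a
  have hJstar : J lam L Ahd Ahr V xa' wstar = J lam L Ahd Ahr V xa wstar := by
    rw [J, J, sum_expand lam L Ahd Ahr hL hAd V xa' hxa'mem,
      sum_expand lam L Ahd Ahr hL hAd V xa hxamem, ← hArsum]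
    congr 1
    refine Finset.sum_congr rfl fun b _ => ?_
    congr 1
    congr 1
    funext j
    by_cases hj : j = k
    · subst hj
      rw [hwk]
      cases b j <;> simp [pt, sNew, fNew, hxa, hxa']
    · simp [hxa, hxa', Function.update_of_ne hj]
  -- J monotone in a for any action
  have hJmono : ∀ w : Fin K → Act,
      J lam L Ahd Ahr V xa w ≤ J lam L Ahd Ahr V xa' w := by
    intro w
    rw [J, J, sum_expand lam L Ahd Ahr hL hAd V xa' hxa'mem,
      sum_expand lam L Ahd Ahr hL hAd V xa hxamem, ← hArsum]
    refine add_le_add le_rfl (Finset.sum_le_sum fun b _ => ?_)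
    refine mul_le_mul_of_nonneg_left ?_
      (Finset.prod_nonneg fun j _ => wt_nonneg _ (hlam j).1 (hlam j).2 _ _)
    refine hV _ ?_ _ ?_ ?_
    · rw [jointSpace, Fintype.mem_piFinset]
      intro j
      exact pt_mem _ _ _ (hL j) (hAd j) _ _ _ ((Fintype.mem_piFinset).mp hxamem j)
    · rw [jointSpace, Fintype.mem_piFinset]
      intro j
      exact pt_mem _ _ _ (hL j) (hAd j) _ _ _ ((Fintype.mem_piFinset).mp hxa'mem j)
    · intro j
      exact pt_mono _ _ _ _ _ _ _ (hord j)
  calc J lam L Ahd Ahr V xa' wstar = J lam L Ahd Ahr V xa wstar := hJstar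
    _ ≤ J lam L Ahd Ahr V xa w' := hopt w' hw'
    _ ≤ J lam L Ahd Ahr V xa' w' := hJmono w'

end AoI
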